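/- For the FCC lattice, if n tiles form an icicle whose uppermost parallelogram has width a and height b and whose towers each have depth at most c with a·b·c ≥ n and a,b,c = Θ(n^{1/3}), then the graph diameter of the tiled set is O(n^{1/3}); in contrast, a line of n tiles (n nodes consecutive in a single direction) has graph diameter exactly n - 1. -/

import Mathlib

def fccDirs : List (ℤ × ℤ × ℤ) :=
  [(0,0,1), (1,0,1), (0,-1,1), (0,1,0), (1,0,0), (1,-1,0),
   (0,-1,0), (-1,0,0), (-1,1,0), (0,0,-1), (-1,0,-1), (0,1,-1)]

/-- The FCC lattice graph on ℤ³. -/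
def fccGraph : SimpleGraph (ℤ × ℤ × ℤ) :=
  SimpleGraph.fromRel (fun v w => w - v ∈ fccDirs)

/-- `T` is an icicle whose uppermost parallelogram has width `a` and height `b`
(spanned by NW = (1,0,0) and N = (0,1,0)) and whose towers extend in direction
DSW = (0,0,-1) with depth at least 1 and at most `c`. -/
def IsIcicle (T : Set (ℤ × ℤ × ℤ)) (a b c : ℕ) : Prop :=
  ∃ (v₀ : ℤ × ℤ × ℤ) (depth : ℕ → ℕ → ℕ),
    (∀ i j, i < a → j < b → 1 ≤ depth i j ∧ depth i j ≤ c) ∧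
    T = {w | ∃ i j k : ℕ, i < a ∧ j < b ∧ k < depth i j ∧
          w = v₀ + ((i : ℤ), (j : ℤ), -(k : ℤ))}

set_option linter.unnecessarySeqFocus false

lemma zero_not_mem_fccDirs : (0 : ℤ × ℤ × ℤ) ∉ fccDirs := by decide

lemma fcc_adj {v w : ℤ × ℤ × ℤ} (h : w - v ∈ fccDirs) : fccGraph.Adj v w := by
  refine (SimpleGraph.fromRel_adj _ v w).mpr ⟨?_, Or.inl h⟩
  rintro rfl
  simp at h
  exact zero_not_mem_fccDirs h

lemma chain_edist {V : Type*} (G : SimpleGraph V) (f : ℕ → V) :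
    ∀ m : ℕ, (∀ t, t < m → G.Adj (f t) (f (t+1))) → G.edist (f 0) (f m) ≤ m := by
  intro m
  induction m with
  | zero => simp [SimpleGraph.edist_self]
  | succ m ih =>
    intro h
    calc G.edist (f 0) (f (m+1)) ≤ G.edist (f 0) (f m) + G.edist (f m) (f (m+1)) :=
          SimpleGraph.edist_triangle
      _ ≤ (m : ℕ∞) + 1 := by
          refine add_le_add (ih fun t ht => h t (by omega)) ?_
          exact le_of_eq (SimpleGraph.edist_eq_one_iff_adj.mpr (h m (by omega)))
      _ = ((m + 1 : ℕ) : ℕ∞) := by push_cast; ring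

lemma step_diff (p d : ℤ × ℤ × ℤ) (t : ℤ) : (p + (t+1)•d) - (p + t•d) = d := by
  rw [add_smul, one_smul]; abel

lemma edist_seg {T : Set (ℤ × ℤ × ℤ)} {d : ℤ × ℤ × ℤ} (hd : d ∈ fccDirs)
    (p : ℤ × ℤ × ℤ) (m : ℕ) (hmem : ∀ t : ℕ, t ≤ m → p + (t:ℤ)•d ∈ T)
    (hp : p ∈ T) (hq : p + (m:ℤ)•d ∈ T) :
    (fccGraph.induce T).edist ⟨p, hp⟩ ⟨p + (m:ℤ)•d, hq⟩ ≤ m := by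
  have key := chain_edist (fccGraph.induce T)
    (fun t => ⟨p + ((min t m : ℕ):ℤ)•d, hmem _ (min_le_right _ _)⟩) m
    (fun t ht => by
      show fccGraph.Adj _ _
      have h1 : min t m = t := by omega
      have h2 : min (t+1) m = t + 1 := by omega
      apply fcc_adj
      simp only [Function.Embedding.coe_subtype, h1, h2]
      push_cast
      rw [step_diff]
      exact hd)
  have h0 : (⟨p + ((min 0 m : ℕ):ℤ)•d, hmem _ (min_le_right _ _)⟩ :
      T) = ⟨p, hp⟩ := Subtype.ext (by simp)
  have hm : (⟨p + ((min m m : ℕ):ℤ)•d, hmem _ (min_le_right _ _)⟩ :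
      T) = ⟨p + (m:ℤ)•d, hq⟩ := Subtype.ext (by simp)
  simpa only [h0, hm] using key

lemma smul_mem_fccDirs {d : ℤ × ℤ × ℤ} (hd : d ∈ fccDirs) (m : ℤ)
    (h : m • d ∈ fccDirs) : m = 1 ∨ m = -1 := by
  fin_cases hd <;>
    (simp only [fccDirs, Prod.smul_mk, smul_eq_mul, List.mem_cons, List.mem_singleton,
       List.not_mem_nil, or_false, Prod.mk.injEq] at h <;> omega)

lemma walk_lb {V : Type*} {G : SimpleGraph V} (f : V → ℤ)
    (hf : ∀ u w, G.Adj u w → |f u - f w| ≤ 1) :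
    ∀ {u w : V} (p : G.Walk u w), |f u - f w| ≤ p.length := by
  intro u w p
  induction p with
  | nil => simp
  | @cons u x w h q ih =>
    have h1 := hf u x h
    have h2 := abs_sub_le (f u) (f x) (f w)
    simp only [SimpleGraph.Walk.length_cons]
    push_cast
    linarith

lemma part2 : ∀ (n : ℕ) (v d : ℤ × ℤ × ℤ), d ∈ fccDirs → 0 < n →
    (fccGraph.induce {w | ∃ k : ℕ, k < n ∧ w = v + (k : ℤ) • d}).diam = n - 1 := by
  intro n v d hd hn
  set S : Set (ℤ × ℤ × ℤ) := {w | ∃ k : ℕ, k < n ∧ w = v + (k : ℤ) • d} with hS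
  have hdne : d ≠ 0 := fun h => zero_not_mem_fccDirs (h ▸ hd)
  have hinj : ∀ x y : ℤ, x • d = y • d → x = y := by
    intro x y h
    have h0 : (x - y) • d = 0 := by rw [sub_smul, h, sub_self]
    rcases smul_eq_zero.mp h0 with h' | h'
    · omega
    · exact absurd h' hdne
  have main : ∀ (k l : ℕ) (hk : k < n) (hl : l < n), k ≤ l →
      (fccGraph.induce S).edist ⟨v + (k:ℤ)•d, ⟨k, hk, rfl⟩⟩ ⟨v + (l:ℤ)•d, ⟨l, hl, rfl⟩⟩
        ≤ ((n-1 : ℕ) : ℕ∞) := by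
    intro k l hk hl hkl
    have hmem : ∀ t : ℕ, t ≤ l - k → (v + (k:ℤ)•d) + (t:ℤ)•d ∈ S := by
      intro t ht
      exact ⟨k + t, by omega, by push_cast; module⟩
    have hseg := edist_seg hd (v + (k:ℤ)•d) (l - k) hmem ⟨k, hk, rfl⟩
      (hmem (l-k) le_rfl)
    have hpt : (⟨(v + (k:ℤ)•d) + (((l-k : ℕ)):ℤ)•d, hmem (l-k) le_rfl⟩ : S)
        = ⟨v + (l:ℤ)•d, ⟨l, hl, rfl⟩⟩ := by
      refine Subtype.ext ?_
      show (v + (k:ℤ)•d) + (((l-k : ℕ)):ℤ)•d = v + (l:ℤ)•d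
      rw [Nat.cast_sub hkl]
      module
    rw [hpt] at hseg
    exact le_trans hseg (Nat.cast_le.mpr (by omega))
  have hub : ∀ u w : ↥S, (fccGraph.induce S).edist u w ≤ ((n-1 : ℕ) : ℕ∞) := by
    rintro ⟨x, hx⟩ ⟨y, hy⟩
    obtain ⟨k, hk, rfl⟩ := hx
    obtain ⟨l, hl, rfl⟩ := hy
    rcases le_total k l with h | h
    · exact main k l hk hl h
    · rw [SimpleGraph.edist_comm]; exact main l k hl hk h
  have hEd : (fccGraph.induce S).ediam ≤ ((n-1 : ℕ) : ℕ∞) :=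
    SimpleGraph.ediam_le_of_edist_le fun u w => hub u w
  -- lower bound
  let f : ↥S → ℤ := fun u => (u.2.choose : ℤ)
  have fspec : ∀ u : ↥S, (f u) < n ∧ (u : ℤ × ℤ × ℤ) = v + (f u) • d := by
    intro u
    obtain ⟨h1, h2⟩ := u.2.choose_spec
    exact ⟨by show ((u.2.choose : ℕ) : ℤ) < (n : ℤ); exact_mod_cast h1, h2⟩
  have hf : ∀ u w : ↥S, (fccGraph.induce S).Adj u w → |f u - f w| ≤ 1 := by
    intro u w hadj
    have hA : fccGraph.Adj (u : ℤ × ℤ × ℤ) (w : ℤ × ℤ × ℤ) := hadj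
    unfold fccGraph at hA
    rw [SimpleGraph.fromRel_adj] at hA
    obtain ⟨-, hC⟩ := hA
    have hu := (fspec u).2
    have hw := (fspec w).2
    rcases hC with h | h
    · rw [hu, hw, show (v + f w • d) - (v + f u • d) = (f w - f u) • d by module] at h
      rcases smul_mem_fccDirs hd _ h with h' | h' <;> (rw [abs_le]; omega)
    · rw [hu, hw, show (v + f u • d) - (v + f w • d) = (f u - f w) • d by module] at h
      rcases smul_mem_fccDirs hd _ h with h' | h' <;> (rw [abs_le]; omega)
  let u₀ : ↥S := ⟨v, ⟨0, hn, by simp⟩⟩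
  let u₁ : ↥S := ⟨v + ((n-1 : ℕ):ℤ)•d, ⟨n-1, by omega, rfl⟩⟩
  have hf0 : f u₀ = 0 := by
    have := (fspec u₀).2
    have h2 : v + (0:ℤ) • d = v + f u₀ • d := by rw [zero_smul, add_zero]; exact this
    exact (hinj _ _ (add_left_cancel h2)).symm
  have hf1 : f u₁ = ((n-1 : ℕ) : ℤ) := by
    have := (fspec u₁).2
    exact (hinj _ _ (add_left_cancel this)).symm
  have hlow : ((n-1 : ℕ) : ℕ∞) ≤ (fccGraph.induce S).edist u₀ u₁ := by
    rw [SimpleGraph.edist_eq_sInf]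
    apply le_sInf
    rintro x ⟨p, rfl⟩
    have hW := walk_lb f hf p
    rw [hf0, hf1] at hW
    rw [zero_sub, abs_neg, abs_of_nonneg (by positivity)] at hW
    show ((n-1 : ℕ) : ℕ∞) ≤ (p.length : ℕ∞)
    exact_mod_cast hW
  have hEdEq : (fccGraph.induce S).ediam = ((n-1 : ℕ) : ℕ∞) :=
    le_antisymm hEd (le_trans hlow (SimpleGraph.edist_le_ediam))
  rw [SimpleGraph.diam, hEdEq]
  exact ENat.toNat_coe _

lemma pt_step (v₀ : ℤ × ℤ × ℤ) (x y z t dx dy dz : ℤ) :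
    (v₀ + (x,y,z)) + t•((dx,dy,dz) : ℤ × ℤ × ℤ) = v₀ + (x + t*dx, y + t*dy, z + t*dz) := by
  rw [add_assoc]
  rfl

lemma pt_eq (v₀ : ℤ × ℤ × ℤ) {x y z x' y' z' : ℤ} (h1 : x = x') (h2 : y = y') (h3 : z = z') :
    v₀ + (x,y,z) = v₀ + (x',y',z') := by rw [h1, h2, h3]

lemma part1 (K : ℝ) (n a b c : ℕ) (T : Set (ℤ × ℤ × ℤ))
    (hIc : IsIcicle T a b c) (hcard : T.ncard = n) (hn : 0 < n) (hnabc : n ≤ a * b * c)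
    (ha : (a : ℝ) ≤ K * (n : ℝ) ^ ((1 : ℝ) / 3))
    (hb : (b : ℝ) ≤ K * (n : ℝ) ^ ((1 : ℝ) / 3))
    (hc : (c : ℝ) ≤ K * (n : ℝ) ^ ((1 : ℝ) / 3)) :
    ((fccGraph.induce T).diam : ℝ) ≤ (4*K) * (n : ℝ) ^ ((1 : ℝ) / 3) := by
  obtain ⟨v₀, depth, hdepth, hT⟩ := hIc
  subst hT
  set s : Set (ℤ × ℤ × ℤ) := {w | ∃ i j k : ℕ, i < a ∧ j < b ∧ k < depth i j ∧
      w = v₀ + ((i : ℤ), (j : ℤ), -(k : ℤ))} with hs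
  have habc : 0 < a * b * c := lt_of_lt_of_le hn hnabc
  have ha0 : 0 < a := Nat.pos_of_ne_zero fun h => by simp [h] at habc
  have hb0 : 0 < b := Nat.pos_of_ne_zero fun h => by simp [h] at habc
  have hc0 : 0 < c := Nat.pos_of_ne_zero fun h => by simp [h] at habc
  have htop : ∀ i j : ℕ, i < a → j < b → v₀ + ((i:ℤ), (j:ℤ), (0:ℤ)) ∈ s := by
    intro i j hi hj
    exact ⟨i, j, 0, hi, hj, (hdepth i j hi hj).1, by norm_num⟩
  -- the four segment bounds
  have key : ∀ u w : ↥s, (fccGraph.induce s).edist u w ≤ ((a + b + 2*c : ℕ) : ℕ∞) := by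
    rintro ⟨x, hx⟩ ⟨y, hy⟩
    obtain ⟨i, j, k, hi, hj, hk, rfl⟩ := hx
    obtain ⟨i', j', k', hi', hj', hk', rfl⟩ := hy
    have hkc : k < c := lt_of_lt_of_le hk (hdepth i j hi hj).2
    have hkc' : k' < c := lt_of_lt_of_le hk' (hdepth i' j' hi' hj').2
    -- seg 1 : up from (i,j,-k) to (i,j,0)
    have e1 : (fccGraph.induce s).edist ⟨_, ⟨i, j, k, hi, hj, hk, rfl⟩⟩
        ⟨_, htop i j hi hj⟩ ≤ (c : ℕ∞) := by
      have hmem : ∀ t : ℕ, t ≤ k →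
          (v₀ + ((i:ℤ), (j:ℤ), -(k:ℤ))) + (t:ℤ)•((0,0,1) : ℤ×ℤ×ℤ) ∈ s := by
        intro t ht
        refine ⟨i, j, k - t, hi, hj, by omega, ?_⟩
        rw [pt_step]
        exact pt_eq _ (by omega) (by omega) (by omega)
      have hseg := edist_seg (by decide) _ k hmem ⟨i, j, k, hi, hj, hk, rfl⟩ (hmem k le_rfl)
      have hpt : (⟨(v₀ + ((i:ℤ), (j:ℤ), -(k:ℤ))) + (k:ℤ)•((0,0,1) : ℤ×ℤ×ℤ),
          hmem k le_rfl⟩ : ↥s) = ⟨_, htop i j hi hj⟩ := by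
        refine Subtype.ext ?_
        show (v₀ + ((i:ℤ), (j:ℤ), -(k:ℤ))) + (k:ℤ)•((0,0,1) : ℤ×ℤ×ℤ)
          = v₀ + ((i:ℤ), (j:ℤ), (0:ℤ))
        rw [pt_step]
        exact pt_eq _ (by omega) (by omega) (by omega)
      rw [hpt] at hseg
      exact le_trans hseg (Nat.cast_le.mpr (by omega))
    -- seg 2 : horizontal i to i'
    have e2 : (fccGraph.induce s).edist ⟨_, htop i j hi hj⟩
        ⟨_, htop i' j hi' hj⟩ ≤ (a : ℕ∞) := by
      rcases le_total i i' with h | h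
      · have hmem : ∀ t : ℕ, t ≤ i' - i →
            (v₀ + ((i:ℤ), (j:ℤ), (0:ℤ))) + (t:ℤ)•((1,0,0) : ℤ×ℤ×ℤ) ∈ s := by
          intro t ht
          refine ⟨i + t, j, 0, by omega, hj, (hdepth (i+t) j (by omega) hj).1, ?_⟩
          rw [pt_step]
          exact pt_eq _ (by omega) (by omega) (by omega)
        have hseg := edist_seg (by decide) _ (i' - i) hmem (htop i j hi hj)
          (hmem (i'-i) le_rfl)
        have hpt : (⟨(v₀ + ((i:ℤ), (j:ℤ), (0:ℤ))) + ((i'-i : ℕ):ℤ)•((1,0,0) : ℤ×ℤ×ℤ),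
            hmem (i'-i) le_rfl⟩ : ↥s) = ⟨_, htop i' j hi' hj⟩ := by
          refine Subtype.ext ?_
          show (v₀ + ((i:ℤ), (j:ℤ), (0:ℤ))) + ((i'-i : ℕ):ℤ)•((1,0,0) : ℤ×ℤ×ℤ)
            = v₀ + ((i':ℤ), (j:ℤ), (0:ℤ))
          rw [pt_step]
          exact pt_eq _ (by omega) (by omega) (by omega)
        rw [hpt] at hseg
        exact le_trans hseg (Nat.cast_le.mpr (by omega))
      · have hmem : ∀ t : ℕ, t ≤ i - i' →
            (v₀ + ((i:ℤ), (j:ℤ), (0:ℤ))) + (t:ℤ)•((-1,0,0) : ℤ×ℤ×ℤ) ∈ s := by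
          intro t ht
          refine ⟨i - t, j, 0, by omega, hj, (hdepth (i-t) j (by omega) hj).1, ?_⟩
          rw [pt_step]
          exact pt_eq _ (by omega) (by omega) (by omega)
        have hseg := edist_seg (by decide) _ (i - i') hmem (htop i j hi hj)
          (hmem (i-i') le_rfl)
        have hpt : (⟨(v₀ + ((i:ℤ), (j:ℤ), (0:ℤ))) + ((i-i' : ℕ):ℤ)•((-1,0,0) : ℤ×ℤ×ℤ),
            hmem (i-i') le_rfl⟩ : ↥s) = ⟨_, htop i' j hi' hj⟩ := by
          refine Subtype.ext ?_
          show (v₀ + ((i:ℤ), (j:ℤ), (0:ℤ))) + ((i-i' : ℕ):ℤ)•((-1,0,0) : ℤ×ℤ×ℤ)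
            = v₀ + ((i':ℤ), (j:ℤ), (0:ℤ))
          rw [pt_step]
          exact pt_eq _ (by omega) (by omega) (by omega)
        rw [hpt] at hseg
        exact le_trans hseg (Nat.cast_le.mpr (by omega))
    -- seg 3 : horizontal j to j'
    have e3 : (fccGraph.induce s).edist ⟨_, htop i' j hi' hj⟩
        ⟨_, htop i' j' hi' hj'⟩ ≤ (b : ℕ∞) := by
      rcases le_total j j' with h | h
      · have hmem : ∀ t : ℕ, t ≤ j' - j →
            (v₀ + ((i':ℤ), (j:ℤ), (0:ℤ))) + (t:ℤ)•((0,1,0) : ℤ×ℤ×ℤ) ∈ s := by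
          intro t ht
          refine ⟨i', j + t, 0, hi', by omega, (hdepth i' (j+t) hi' (by omega)).1, ?_⟩
          rw [pt_step]
          exact pt_eq _ (by omega) (by omega) (by omega)
        have hseg := edist_seg (by decide) _ (j' - j) hmem (htop i' j hi' hj)
          (hmem (j'-j) le_rfl)
        have hpt : (⟨(v₀ + ((i':ℤ), (j:ℤ), (0:ℤ))) + ((j'-j : ℕ):ℤ)•((0,1,0) : ℤ×ℤ×ℤ),
            hmem (j'-j) le_rfl⟩ : ↥s) = ⟨_, htop i' j' hi' hj'⟩ := by
          refine Subtype.ext ?_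
          show (v₀ + ((i':ℤ), (j:ℤ), (0:ℤ))) + ((j'-j : ℕ):ℤ)•((0,1,0) : ℤ×ℤ×ℤ)
            = v₀ + ((i':ℤ), (j':ℤ), (0:ℤ))
          rw [pt_step]
          exact pt_eq _ (by omega) (by omega) (by omega)
        rw [hpt] at hseg
        exact le_trans hseg (Nat.cast_le.mpr (by omega))
      · have hmem : ∀ t : ℕ, t ≤ j - j' →
            (v₀ + ((i':ℤ), (j:ℤ), (0:ℤ))) + (t:ℤ)•((0,-1,0) : ℤ×ℤ×ℤ) ∈ s := by
          intro t ht
          refine ⟨i', j - t, 0, hi', by omega, (hdepth i' (j-t) hi' (by omega)).1, ?_⟩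
          rw [pt_step]
          exact pt_eq _ (by omega) (by omega) (by omega)
        have hseg := edist_seg (by decide) _ (j - j') hmem (htop i' j hi' hj)
          (hmem (j-j') le_rfl)
        have hpt : (⟨(v₀ + ((i':ℤ), (j:ℤ), (0:ℤ))) + ((j-j' : ℕ):ℤ)•((0,-1,0) : ℤ×ℤ×ℤ),
            hmem (j-j') le_rfl⟩ : ↥s) = ⟨_, htop i' j' hi' hj'⟩ := by
          refine Subtype.ext ?_
          show (v₀ + ((i':ℤ), (j:ℤ), (0:ℤ))) + ((j-j' : ℕ):ℤ)•((0,-1,0) : ℤ×ℤ×ℤ)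
            = v₀ + ((i':ℤ), (j':ℤ), (0:ℤ))
          rw [pt_step]
          exact pt_eq _ (by omega) (by omega) (by omega)
        rw [hpt] at hseg
        exact le_trans hseg (Nat.cast_le.mpr (by omega))
    -- seg 4 : down from (i',j',0) to (i',j',-k')
    have e4 : (fccGraph.induce s).edist ⟨_, htop i' j' hi' hj'⟩
        ⟨_, ⟨i', j', k', hi', hj', hk', rfl⟩⟩ ≤ (c : ℕ∞) := by
      have hmem : ∀ t : ℕ, t ≤ k' →
          (v₀ + ((i':ℤ), (j':ℤ), (0:ℤ))) + (t:ℤ)•((0,0,-1) : ℤ×ℤ×ℤ) ∈ s := by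
        intro t ht
        refine ⟨i', j', t, hi', hj', by omega, ?_⟩
        rw [pt_step]
        exact pt_eq _ (by omega) (by omega) (by omega)
      have hseg := edist_seg (by decide) _ k' hmem (htop i' j' hi' hj') (hmem k' le_rfl)
      have hpt : (⟨(v₀ + ((i':ℤ), (j':ℤ), (0:ℤ))) + (k':ℤ)•((0,0,-1) : ℤ×ℤ×ℤ),
          hmem k' le_rfl⟩ : ↥s) = ⟨_, ⟨i', j', k', hi', hj', hk', rfl⟩⟩ := by
        refine Subtype.ext ?_
        show (v₀ + ((i':ℤ), (j':ℤ), (0:ℤ))) + (k':ℤ)•((0,0,-1) : ℤ×ℤ×ℤ)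
          = v₀ + ((i':ℤ), (j':ℤ), -(k':ℤ))
        rw [pt_step]
        exact pt_eq _ (by omega) (by omega) (by omega)
      rw [hpt] at hseg
      exact le_trans hseg (Nat.cast_le.mpr (by omega))
    calc (fccGraph.induce s).edist _ _
        ≤ _ + _ := SimpleGraph.edist_triangle (v := ⟨_, htop i j hi hj⟩)
      _ ≤ _ + (_ + _) := add_le_add le_rfl
          (SimpleGraph.edist_triangle (v := (⟨_, htop i' j hi' hj⟩ : ↥s)))
      _ ≤ _ + (_ + (_ + _)) := add_le_add le_rfl (add_le_add le_rfl
          (SimpleGraph.edist_triangle (v := (⟨_, htop i' j' hi' hj'⟩ : ↥s))))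
      _ ≤ (c : ℕ∞) + ((a : ℕ∞) + ((b : ℕ∞) + (c : ℕ∞))) :=
          add_le_add e1 (add_le_add e2 (add_le_add e3 e4))
      _ = ((a + b + 2*c : ℕ) : ℕ∞) := by push_cast; ring
  have hEd : (fccGraph.induce s).ediam ≤ ((a + b + 2*c : ℕ) : ℕ∞) :=
    SimpleGraph.ediam_le_of_edist_le fun u w => key u w
  have hdiam : (fccGraph.induce s).diam ≤ a + b + 2*c := by
    have := ENat.toNat_le_toNat hEd (ENat.coe_ne_top _)
    rw [ENat.toNat_coe] at this
    exact this
  have hcast : ((fccGraph.induce s).diam : ℝ) ≤ ((a : ℝ) + b + 2*c) := by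
    have := (Nat.cast_le (α := ℝ)).mpr hdiam
    push_cast at this
    linarith
  linarith

/-- An icicle of n tiles whose parallelogram width a, height b and tower depth
bound c satisfy a·b·c ≥ n and a, b, c = Θ(n^(1/3)) has graph diameter
O(n^(1/3)); in contrast, a line of n tiles has graph diameter exactly n - 1. -/
theorem stmt_19 :
    (∀ K : ℝ, ∃ C : ℝ, ∀ (n a b c : ℕ) (T : Set (ℤ × ℤ × ℤ)),
      IsIcicle T a b c → T.ncard = n → 0 < n → n ≤ a * b * c →
      (a : ℝ) ≤ K * (n : ℝ) ^ ((1 : ℝ) / 3) →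
      (b : ℝ) ≤ K * (n : ℝ) ^ ((1 : ℝ) / 3) →
      (c : ℝ) ≤ K * (n : ℝ) ^ ((1 : ℝ) / 3) →
      ((fccGraph.induce T).diam : ℝ) ≤ C * (n : ℝ) ^ ((1 : ℝ) / 3)) ∧
    (∀ (n : ℕ) (v d : ℤ × ℤ × ℤ), d ∈ fccDirs → 0 < n →
      (fccGraph.induce
        {w | ∃ k : ℕ, k < n ∧ w = v + (k : ℤ) • d}).diam = n - 1) := by
  constructor
  · intro K
    exact ⟨4 * K, fun n a b c T h1 h2 h3 h4 h5 h6 h7 =>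
      part1 K n a b c T h1 h2 h3 h4 h5 h6 h7⟩
  · exact part2
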